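/- Let n > 3 be an integer and b̃ ≤ 0. Then ‖T̃ₙ(2, b̃)⁻¹‖∞ ≤ max{ (n+1)²/8 + (4 − (2+|b̃|)·n)/(2(1+|b̃|)) , (1/(1+|b̃|)) · ( n/2 + 2/((n−1)(1+|b̃|) − 2) ) }. -/

import Mathlib

open Matrix BigOperators Finset

/-- The symmetric tridiagonal near-Toeplitz matrix with corner diagonal entries `bt`,
interior diagonal entries `b`, and off-diagonal entries `-1` (0-based indices). -/
noncomputable def Ttilde (n : ℕ) (b bt : ℝ) : Matrix (Fin n) (Fin n) ℝ :=
  Matrix.of fun i j =>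
    if (i : ℕ) = (j : ℕ) then (if (i : ℕ) = 0 ∨ (i : ℕ) = n - 1 then bt else b)
    else if (i : ℕ) + 1 = (j : ℕ) ∨ (j : ℕ) + 1 = (i : ℕ) then (-1 : ℝ) else 0

/-- The maximum absolute row sum (operator norm induced by the sup norm). -/
noncomputable def normInf {n : ℕ} (A : Matrix (Fin n) (Fin n) ℝ) : ℝ :=
  ⨆ i : Fin n, ∑ j : Fin n, |A i j|

/-! ### Auxiliary definitions -/

noncomputable def Tfun (n : ℕ) (b bt : ℝ) (i j : ℕ) : ℝ :=
  if i = j then (if i = 0 ∨ i = n - 1 then bt else b)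
  else if i + 1 = j ∨ j + 1 = i then (-1 : ℝ) else 0

noncomputable def qA (c : ℝ) (k : ℕ) : ℝ := 1 - c * k

noncomputable def Bfun (n : ℕ) (c : ℝ) (i j : ℕ) : ℝ :=
  qA c (min i j) * qA c (n - 1 - max i j) / (c * (c * ((n:ℝ) - 1) - 2))

noncomputable def Bmat (n : ℕ) (c : ℝ) : Matrix (Fin n) (Fin n) ℝ :=
  Matrix.of fun i j => Bfun n c (i : ℕ) (j : ℕ)

lemma dpos (n : ℕ) (hn : 3 < n) (c : ℝ) (hc : 1 ≤ c) :
    0 < c * (c * ((n:ℝ) - 1) - 2) := by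
  have hn4 : (4:ℝ) ≤ n := by exact_mod_cast hn
  have : (1:ℝ) ≤ c * ((n:ℝ) - 1) - 2 := by nlinarith
  nlinarith

/-! ### The tridiagonal sum lemma -/

lemma Tfun_zero (n : ℕ) (hn : 3 < n) (b bt : ℝ) (i j : ℕ)
    (h : ¬ (i - 1 ≤ j ∧ j ≤ i + 1)) : Tfun n b bt i j = 0 := by
  unfold Tfun; split_ifs <;> first | rfl | omega | simp_all

lemma trisum (n : ℕ) (hn : 3 < n) (bt : ℝ) (g : ℕ → ℝ) (i : ℕ) (hi : i < n) :
    ∑ j ∈ range n, Tfun n 2 bt i j * g j =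
      if i = 0 then bt * g 0 - g 1
      else if i = n - 1 then bt * g (n - 1) - g (n - 2)
      else -g (i - 1) + 2 * g i - g (i + 1) := by
  rcases eq_or_ne i 0 with rfl | hi0
  · rw [if_pos rfl]
    rw [← Finset.sum_subset (s₁ := ({0, 1} : Finset ℕ))
        (by intro j hj; simp at hj; simp only [Finset.mem_range]; omega)
        (by intro j hj hj'; simp at hj hj'; rw [Tfun_zero n hn 2 bt 0 j (by omega), zero_mul])]
    rw [Finset.sum_pair (by omega)]
    have h1 : Tfun n 2 bt 0 0 = bt := by unfold Tfun; split_ifs <;> first | rfl | omega | simp_all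
    have h2 : Tfun n 2 bt 0 1 = -1 := by unfold Tfun; split_ifs <;> first | rfl | omega | simp_all
    rw [h1, h2]; ring
  · rcases eq_or_ne i (n - 1) with rfl | hi1
    · rw [if_neg hi0, if_pos rfl]
      rw [← Finset.sum_subset (s₁ := ({n - 2, n - 1} : Finset ℕ))
          (by intro j hj; simp at hj; simp only [Finset.mem_range]; omega)
          (by intro j hj hj'; simp at hj hj'; rw [Tfun_zero n hn 2 bt (n-1) j (by omega), zero_mul])]
      rw [Finset.sum_pair (by omega)]
      have h1 : Tfun n 2 bt (n-1) (n-2) = -1 := by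
        unfold Tfun; split_ifs <;> first | rfl | omega | simp_all
      have h2 : Tfun n 2 bt (n-1) (n-1) = bt := by
        unfold Tfun; split_ifs <;> first | rfl | omega | simp_all
      rw [h1, h2]; ring
    · rw [if_neg hi0, if_neg hi1]
      rw [← Finset.sum_subset (s₁ := ({i - 1, i, i + 1} : Finset ℕ))
          (by intro j hj; simp at hj; simp only [Finset.mem_range]; omega)
          (by intro j hj hj'; simp at hj hj'; rw [Tfun_zero n hn 2 bt i j (by omega), zero_mul])]
      rw [Finset.sum_insert (by simp; omega), Finset.sum_pair (by omega)]
      have h1 : Tfun n 2 bt i (i-1) = -1 := by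
        unfold Tfun; split_ifs <;> first | rfl | omega | simp_all
      have h2 : Tfun n 2 bt i i = 2 := by
        unfold Tfun; split_ifs <;> first | rfl | omega | simp_all
      have h3 : Tfun n 2 bt i (i+1) = -1 := by
        unfold Tfun; split_ifs <;> first | rfl | omega | simp_all
      rw [h1, h2, h3]; ring

/-! ### The entry identity -/

lemma entry_eq (n : ℕ) (hn : 3 < n) (c : ℝ) (hc : 1 ≤ c)
    (hd' : c * (c * ((n:ℝ) - 1) - 2) ≠ 0) (I K : ℕ) (hI : I < n) (hK : K < n) :
    (if I = 0 then (1-c) * Bfun n c 0 K - Bfun n c 1 K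
     else if I = n-1 then (1-c) * Bfun n c (n-1) K - Bfun n c (n-2) K
     else -Bfun n c (I-1) K + 2*Bfun n c I K - Bfun n c (I+1) K)
    = if I = K then 1 else 0 := by
  have hn4 : (4:ℝ) ≤ n := by exact_mod_cast hn
  rcases eq_or_ne I 0 with rfl | hI0
  · rw [if_pos rfl]
    rcases eq_or_ne K 0 with rfl | hK0
    · rw [if_pos rfl]
      unfold Bfun qA
      rw [show min 0 0 = 0 from by omega, show max 0 0 = 0 from by omega,
          show min 1 0 = 0 from by omega, show max 1 0 = 1 from by omega,
          show n - 1 - 0 = n - 1 from by omega]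
      have c1 : ((n - 1 : ℕ) : ℝ) = (n:ℝ) - 1 := by
        rw [Nat.cast_sub (by omega)]; norm_num
      have c2 : ((n - 1 - 1 : ℕ) : ℝ) = (n:ℝ) - 2 := by
        rw [show n - 1 - 1 = n - 2 from by omega, Nat.cast_sub (by omega)]; norm_num
      rw [c1, c2]
      have hx : c * ((n:ℝ) - 1) - 2 ≠ 0 := by intro h; apply hd'; rw [h]; ring
      field_simp [hx]
      ring
    · rw [if_neg (fun h => hK0 h.symm)]
      unfold Bfun qA
      rw [show min 0 K = 0 from by omega, show max 0 K = K from by omega,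
          show min 1 K = 1 from by omega, show max 1 K = K from by omega]
      push_cast
      ring
  · rcases eq_or_ne I (n-1) with rfl | hI1
    · rw [if_neg hI0, if_pos rfl]
      rcases eq_or_ne K (n-1) with rfl | hK1
      · rw [if_pos rfl]
        unfold Bfun qA
        rw [show min (n-1) (n-1) = n-1 from by omega, show max (n-1) (n-1) = n-1 from by omega,
            show min (n-2) (n-1) = n-2 from by omega, show max (n-2) (n-1) = n-1 from by omega,
            show n - 1 - (n-1) = 0 from by omega]
        have c1 : ((n - 1 : ℕ) : ℝ) = (n:ℝ) - 1 := by
          rw [Nat.cast_sub (by omega)]; norm_num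
        have c2 : ((n - 2 : ℕ) : ℝ) = (n:ℝ) - 2 := by
          rw [Nat.cast_sub (by omega)]; norm_num
        rw [c1, c2]
        have hx : c * ((n:ℝ) - 1) - 2 ≠ 0 := by intro h; apply hd'; rw [h]; ring
        field_simp [hx]
        ring
      · rw [if_neg (by omega)]
        unfold Bfun qA
        rw [show min (n-1) K = K from by omega, show max (n-1) K = n-1 from by omega,
            show min (n-2) K = K from by omega, show max (n-2) K = n-2 from by omega,
            show n - 1 - (n-1) = 0 from by omega, show n - 1 - (n-2) = 1 from by omega]
        push_cast
        ring
    · rw [if_neg hI0, if_neg hI1]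
      have hI2 : 1 ≤ I ∧ I ≤ n - 2 := by omega
      rcases lt_trichotomy K I with hKI | hKIe | hKI
      · rw [if_neg (by omega)]
        unfold Bfun qA
        rw [show min (I-1) K = K from by omega, show max (I-1) K = I-1 from by omega,
            show min I K = K from by omega, show max I K = I from by omega,
            show min (I+1) K = K from by omega, show max (I+1) K = I+1 from by omega]
        have c1 : ((n - 1 - (I-1) : ℕ) : ℝ) = (n:ℝ) - I := by
          rw [show n - 1 - (I-1) = n - I from by omega, Nat.cast_sub (by omega)]
        have c2 : ((n - 1 - I : ℕ) : ℝ) = (n:ℝ) - I - 1 := by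
          rw [show n - 1 - I = n - (I+1) from by omega, Nat.cast_sub (by omega)]; push_cast; ring
        have c3 : ((n - 1 - (I+1) : ℕ) : ℝ) = (n:ℝ) - I - 2 := by
          rw [show n - 1 - (I+1) = n - (I+2) from by omega, Nat.cast_sub (by omega)]; push_cast; ring
        rw [c1, c2, c3]
        ring
      · subst hKIe
        rw [if_pos rfl]
        unfold Bfun qA
        rw [show min (K-1) K = K-1 from by omega, show max (K-1) K = K from by omega,
            show min K K = K from by omega, show max K K = K from by omega,
            show min (K+1) K = K from by omega, show max (K+1) K = K+1 from by omega]
        have c0 : ((K - 1 : ℕ) : ℝ) = (K:ℝ) - 1 := by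
          rw [Nat.cast_sub (by omega)]; norm_num
        have c2 : ((n - 1 - K : ℕ) : ℝ) = (n:ℝ) - K - 1 := by
          rw [show n - 1 - K = n - (K+1) from by omega, Nat.cast_sub (by omega)]; push_cast; ring
        have c3 : ((n - 1 - (K+1) : ℕ) : ℝ) = (n:ℝ) - K - 2 := by
          rw [show n - 1 - (K+1) = n - (K+2) from by omega, Nat.cast_sub (by omega)]; push_cast; ring
        rw [c0, c2, c3]
        have hx : c * ((n:ℝ) - 1) - 2 ≠ 0 := by intro h; apply hd'; rw [h]; ring
        field_simp [hx]
        ring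
      · rw [if_neg (by omega)]
        unfold Bfun qA
        rw [show min (I-1) K = I-1 from by omega, show max (I-1) K = K from by omega,
            show min I K = I from by omega, show max I K = K from by omega,
            show min (I+1) K = I+1 from by omega, show max (I+1) K = K from by omega]
        have c0 : ((I - 1 : ℕ) : ℝ) = (I:ℝ) - 1 := by
          rw [Nat.cast_sub (by omega)]; norm_num
        rw [c0]
        push_cast
        ring

/-! ### T * B = 1 -/

lemma TB_eq_one (n : ℕ) (hn : 3 < n) (c : ℝ) (hc : 1 ≤ c) (bt : ℝ) (hbc : bt = 1 - c) :
    Ttilde n 2 bt * Bmat n c = 1 := by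
  subst hbc
  have hd := dpos n hn c hc
  have hd' : c * (c * ((n:ℝ) - 1) - 2) ≠ 0 := ne_of_gt hd
  ext i k
  rw [Matrix.mul_apply, Matrix.one_apply]
  have hTt : ∀ j : Fin n, Ttilde n 2 (1-c) i j = Tfun n 2 (1-c) (i:ℕ) (j:ℕ) := fun j => rfl
  have hB : ∀ j : Fin n, Bmat n c j k = Bfun n c (j:ℕ) (k:ℕ) := fun j => rfl
  have step1 : ∑ j : Fin n, Ttilde n 2 (1-c) i j * Bmat n c j k
      = ∑ j ∈ range n, Tfun n 2 (1-c) (i:ℕ) j * Bfun n c j (k:ℕ) := by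
    rw [← Fin.sum_univ_eq_sum_range (fun j => Tfun n 2 (1-c) (i:ℕ) j * Bfun n c j (k:ℕ)) n]
    exact Finset.sum_congr rfl fun j _ => by rw [hTt j, hB j]
  rw [step1, trisum n hn (1-c) _ (i:ℕ) i.isLt]
  have := entry_eq n hn c hc hd' (i:ℕ) (k:ℕ) i.isLt k.isLt
  rw [this]
  by_cases h : i = k
  · rw [if_pos h, if_pos (by rw [h])]
  · rw [if_neg h, if_neg (fun hh => h (Fin.ext hh))]

/-! ### Row sums of B -/

lemma absq_succ (c : ℝ) (hc : 1 ≤ c) (k : ℕ) (hk : 1 ≤ k) : |qA c k| = c * k - 1 := by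
  unfold qA
  rw [abs_of_nonpos]
  · ring
  · have : (1:ℝ) ≤ (k:ℝ) := by exact_mod_cast hk
    nlinarith

lemma AS_closed (c : ℝ) (hc : 1 ≤ c) (m : ℕ) (hm : 1 ≤ m) :
    ∑ k ∈ range m, |qA c k| = 1 - ((m:ℝ) - 1) + c * ((m:ℝ) - 1) * m / 2 := by
  induction m with
  | zero => omega
  | succ p ih =>
    rcases Nat.eq_or_lt_of_le hm with h1 | h1
    · rw [← h1]
      simp [qA]
    · have hp : 1 ≤ p := by omega
      rw [Finset.sum_range_succ, ih hp, absq_succ c hc p hp]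
      push_cast
      ring

lemma rowsum_eq (n : ℕ) (hn : 3 < n) (c : ℝ) (hc : 1 ≤ c)
    (hd : 0 < c * (c * ((n:ℝ) - 1) - 2)) (I : ℕ) (hI : I < n) :
    ∑ j ∈ range n, |Bfun n c I j| =
      (|qA c (n-1-I)| * (∑ k ∈ range I, |qA c k|)
        + |qA c I| * (∑ k ∈ range (n-I), |qA c k|)) / (c * (c * ((n:ℝ) - 1) - 2)) := by
  have habsd : |c * (c * ((n:ℝ) - 1) - 2)| = c * (c * ((n:ℝ) - 1) - 2) := abs_of_pos hd
  have hsplit : ∑ j ∈ range n, |Bfun n c I j|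
      = (∑ j ∈ Ico 0 I, |Bfun n c I j|) + (∑ j ∈ Ico I n, |Bfun n c I j|) := by
    rw [Finset.range_eq_Ico, Finset.sum_Ico_consecutive _ (Nat.zero_le I) (le_of_lt hI)]
  have h1 : ∑ j ∈ Ico 0 I, |Bfun n c I j|
      = (∑ k ∈ range I, |qA c k|) * |qA c (n-1-I)| / (c * (c * ((n:ℝ) - 1) - 2)) := by
    have step : ∀ j ∈ Ico 0 I, |Bfun n c I j|
        = |qA c j| * |qA c (n-1-I)| / (c * (c * ((n:ℝ) - 1) - 2)) := by
      intro j hj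
      rw [Finset.mem_Ico] at hj
      unfold Bfun
      rw [show min I j = j from by omega, show max I j = I from by omega,
          abs_div, abs_mul, habsd]
    rw [Finset.sum_congr rfl step, ← Finset.sum_div, ← Finset.sum_mul, Finset.range_eq_Ico]
  have h2 : ∑ j ∈ Ico I n, |Bfun n c I j|
      = |qA c I| * (∑ k ∈ range (n-I), |qA c k|) / (c * (c * ((n:ℝ) - 1) - 2)) := by
    rw [Finset.sum_Ico_eq_sum_range]
    have step : ∀ j ∈ range (n - I), |Bfun n c I (I + j)|
        = |qA c I| * |qA c ((n-I) - 1 - j)| / (c * (c * ((n:ℝ) - 1) - 2)) := by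
      intro j hj
      rw [Finset.mem_range] at hj
      unfold Bfun
      rw [show min I (I+j) = I from by omega, show max I (I+j) = I + j from by omega,
          show n - 1 - (I + j) = (n - I) - 1 - j from by omega, abs_div, abs_mul, habsd]
    rw [Finset.sum_congr rfl step, ← Finset.sum_div, ← Finset.mul_sum,
        Finset.sum_range_reflect (fun k => |qA c k|) (n - I)]
  rw [hsplit, h1, h2]
  ring

/-! ### Row bounds -/

lemma row_boundary (n : ℕ) (hn : 3 < n) (c : ℝ) (hc : 1 ≤ c) (I : ℕ)
    (hI : I = 0 ∨ I = n - 1) :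
    ∑ j ∈ range n, |Bfun n c I j| =
      (1/c) * ((n:ℝ)/2 + 2/(((n:ℝ)-1)*c - 2)) := by
  have hd := dpos n hn c hc
  have hn4 : (4:ℝ) ≤ n := by exact_mod_cast hn
  have hc0 : c ≠ 0 := by linarith
  have hden : ((n:ℝ)-1)*c - 2 ≠ 0 := by nlinarith
  have hd' : c * (c * ((n:ℝ) - 1) - 2) ≠ 0 := ne_of_gt hd
  have hq0 : |qA c 0| = 1 := by simp [qA]
  have cn : ((n:ℕ) : ℝ) = (n:ℝ) := rfl
  rcases hI with rfl | rfl
  · rw [rowsum_eq n hn c hc hd 0 (by omega)]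
    rw [show n - 0 = n from by omega, Finset.range_zero, Finset.sum_empty,
        AS_closed c hc n (by omega), hq0]
    field_simp
    ring
  · rw [rowsum_eq n hn c hc hd (n-1) (by omega)]
    rw [show n - 1 - (n-1) = 0 from by omega, show n - (n-1) = 1 from by omega, hq0]
    rw [AS_closed c hc (n-1) (by omega), AS_closed c hc 1 (by omega)]
    have c1 : ((n - 1 : ℕ) : ℝ) = (n:ℝ) - 1 := by
      rw [Nat.cast_sub (by omega)]; norm_num
    have eq1 : |qA c (n-1)| = c * ((n:ℝ) - 1) - 1 := by
      rw [absq_succ c hc (n-1) (by omega), c1]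
    rw [eq1]
    norm_num
    rw [c1]
    have hx : c * ((n:ℝ) - 1) - 2 ≠ 0 := by intro h; apply hd'; rw [h]; ring
    field_simp [hx]
    ring

lemma row_interior (n : ℕ) (hn : 3 < n) (c : ℝ) (hc : 1 ≤ c) (I : ℕ)
    (hI1 : 1 ≤ I) (hI2 : I ≤ n - 2) :
    ∑ j ∈ range n, |Bfun n c I j| ≤
      ((n:ℝ)+1)^2/8 + (4 - (1+c)*(n:ℝ))/(2*c) := by
  have hd := dpos n hn c hc
  have hn4 : (4:ℝ) ≤ n := by exact_mod_cast hn
  have hxI : (1:ℝ) ≤ (I:ℝ) := by exact_mod_cast hI1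
  have hxI2 : (I:ℝ) ≤ (n:ℝ) - 2 := by
    have : (I:ℝ) ≤ ((n-2 : ℕ) : ℝ) := by exact_mod_cast hI2
    rw [Nat.cast_sub (by omega)] at this
    push_cast at this
    linarith
  rw [rowsum_eq n hn c hc hd I (by omega)]
  have cni : ((n - 1 - I : ℕ) : ℝ) = (n:ℝ) - (I:ℝ) - 1 := by
    rw [show n - 1 - I = n - (I+1) from by omega, Nat.cast_sub (by omega)]; push_cast; ring
  have cnmi : ((n - I : ℕ) : ℝ) = (n:ℝ) - (I:ℝ) := by
    rw [Nat.cast_sub (by omega)]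
  have e1 : |qA c (n-1-I)| = c * ((n:ℝ) - (I:ℝ) - 1) - 1 := by
    rw [absq_succ c hc (n-1-I) (by omega), cni]
  have e2 : |qA c I| = c * (I:ℝ) - 1 := absq_succ c hc I hI1
  have e3 : ∑ k ∈ range I, |qA c k| = 1 - ((I:ℝ) - 1) + c * ((I:ℝ) - 1) * I / 2 :=
    AS_closed c hc I hI1
  have e4 : ∑ k ∈ range (n-I), |qA c k|
      = 1 - (((n:ℝ) - (I:ℝ)) - 1) + c * (((n:ℝ) - (I:ℝ)) - 1) * ((n:ℝ) - (I:ℝ)) / 2 := by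
    rw [AS_closed c hc (n-I) (by omega), cnmi]
  rw [e1, e2, e3, e4]
  rw [div_le_iff₀ hd]
  have key : (((n:ℝ)+1)^2/8 + (4 - (1+c)*(n:ℝ))/(2*c)) * (c * (c * ((n:ℝ) - 1) - 2))
      - ((c * ((n:ℝ) - (I:ℝ) - 1) - 1) * (1 - ((I:ℝ) - 1) + c * ((I:ℝ) - 1) * I / 2)
        + (c * (I:ℝ) - 1) * (1 - (((n:ℝ) - (I:ℝ)) - 1)
            + c * (((n:ℝ) - (I:ℝ)) - 1) * ((n:ℝ) - (I:ℝ)) / 2))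
      = c * (c * ((n:ℝ) - 1) - 2) * (2*(I:ℝ) - ((n:ℝ) - 1))^2 / 8 := by
    field_simp
    ring
  have hsq : 0 ≤ c * (c * ((n:ℝ) - 1) - 2) * (2*(I:ℝ) - ((n:ℝ) - 1))^2 / 8 := by
    have h1 : (0:ℝ) ≤ c * (c * ((n:ℝ) - 1) - 2) := le_of_lt hd
    positivity
  linarith [key, hsq]

/-! ### Main lemma -/

lemma main_c (n : ℕ) (hn : 3 < n) (c : ℝ) (hc : 1 ≤ c) (bt : ℝ) (hbc : bt = 1 - c) :
    normInf ((Ttilde n 2 bt)⁻¹) ≤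
      max (((n:ℝ) + 1) ^ 2 / 8 + (4 - (1+c) * (n:ℝ)) / (2 * c))
        ((1 / c) * ((n:ℝ) / 2 + 2 / (((n:ℝ) - 1) * c - 2))) := by
  have hinv : (Ttilde n 2 bt)⁻¹ = Bmat n c :=
    Matrix.inv_eq_right_inv (TB_eq_one n hn c hc bt hbc)
  rw [hinv]
  unfold normInf
  have hne : Nonempty (Fin n) := ⟨⟨0, by omega⟩⟩
  apply ciSup_le
  intro i
  have hrow : ∑ j : Fin n, |Bmat n c i j| = ∑ j ∈ range n, |Bfun n c (i:ℕ) j| := by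
    rw [← Fin.sum_univ_eq_sum_range (fun j => |Bfun n c (i:ℕ) j|) n]
    rfl
  rw [hrow]
  by_cases hb : (i:ℕ) = 0 ∨ (i:ℕ) = n - 1
  · rw [row_boundary n hn c hc (i:ℕ) hb]
    exact le_max_right _ _
  · push_neg at hb
    have h1 : 1 ≤ (i:ℕ) := by omega
    have h2 : (i:ℕ) ≤ n - 2 := by have := i.isLt; omega
    exact le_trans (row_interior n hn c hc (i:ℕ) h1 h2) (le_max_left _ _)

theorem stmt11 (n : ℕ) (hn : 3 < n) (bt : ℝ) (hbt : bt ≤ 0) :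
    normInf ((Ttilde n 2 bt)⁻¹) ≤
      max (((n : ℝ) + 1) ^ 2 / 8 + (4 - (2 + |bt|) * (n : ℝ)) / (2 * (1 + |bt|)))
        ((1 / (1 + |bt|)) * ((n : ℝ) / 2 + 2 / (((n : ℝ) - 1) * (1 + |bt|) - 2))) := by
  rw [abs_of_nonpos hbt]
  have e1 : ((n:ℝ) + 1) ^ 2 / 8 + (4 - (2 + -bt) * (n:ℝ)) / (2 * (1 + -bt))
      = ((n:ℝ) + 1) ^ 2 / 8 + (4 - (1 + (1 - bt)) * (n:ℝ)) / (2 * (1 - bt)) := by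
    ring_nf
  have e2 : (1 / (1 + -bt)) * ((n:ℝ) / 2 + 2 / (((n:ℝ) - 1) * (1 + -bt) - 2))
      = (1 / (1 - bt)) * ((n:ℝ) / 2 + 2 / (((n:ℝ) - 1) * (1 - bt) - 2)) := by
    ring_nf
  rw [e1, e2]
  exact main_c n hn (1 - bt) (by linarith) bt (by ring)
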